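/- For A, B ∈ 𝒫_J: (i) A ♯^J B = B ♯^J A, and (ii) (A ♯^J B)^{-1} = A^{-1} ♯^J B^{-1}. -/

import Mathlib

open Matrix
open scoped ComplexOrder

noncomputable def sigJ (p q : ℕ) : Matrix (Fin p ⊕ Fin q) (Fin p ⊕ Fin q) ℂ :=
  Matrix.fromBlocks 1 0 0 (-1)

/-- Real power of a matrix via the continuous functional calculus; for a positive definite
matrix this is the usual power. -/
noncomputable def mpow {p q : ℕ} (A : Matrix (Fin p ⊕ Fin q) (Fin p ⊕ Fin q) ℂ) (t : ℝ) :
    Matrix (Fin p ⊕ Fin q) (Fin p ⊕ Fin q) ℂ :=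
  cfc (fun x : ℝ => x ^ t) A

/-- The J-power `X^t_J := J·(J X)^t`. -/
noncomputable def Jpow {p q : ℕ} (X : Matrix (Fin p ⊕ Fin q) (Fin p ⊕ Fin q) ℂ) (t : ℝ) :
    Matrix (Fin p ⊕ Fin q) (Fin p ⊕ Fin q) ℂ :=
  sigJ p q * mpow (sigJ p q * X) t

/-- The geometric mean `P ♯ Q = P^{1/2} (P^{-1/2} Q P^{-1/2})^{1/2} P^{1/2}` of positive
definite matrices. -/
noncomputable def gmean {p q : ℕ} (P Q : Matrix (Fin p ⊕ Fin q) (Fin p ⊕ Fin q) ℂ) :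
    Matrix (Fin p ⊕ Fin q) (Fin p ⊕ Fin q) ℂ :=
  mpow P (1 / 2) * mpow (mpow P (-(1 / 2)) * Q * mpow P (-(1 / 2))) (1 / 2) * mpow P (1 / 2)

/-- The J-geometric mean `A ♯^J B := J·((J A) ♯ (J B))`. -/
noncomputable def sharpJ {p q : ℕ} (A B : Matrix (Fin p ⊕ Fin q) (Fin p ⊕ Fin q) ℂ) :
    Matrix (Fin p ⊕ Fin q) (Fin p ⊕ Fin q) ℂ :=
  sigJ p q * gmean (sigJ p q * A) (sigJ p q * B)

section Aux
variable {n : Type*} [Fintype n] [DecidableEq n]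

lemma spectrum_pos' {P : Matrix n n ℂ} (hP : P.PosDef) : ∀ x ∈ spectrum ℝ P, 0 < x := by
  intro x hx
  rw [hP.1.spectrum_real_eq_range_eigenvalues] at hx
  obtain ⟨i, rfl⟩ := hx
  exact hP.eigenvalues_pos i

lemma contOn {P : Matrix n n ℂ} (f : ℝ → ℝ) : ContinuousOn f (spectrum ℝ P) := by
  rw [continuousOn_iff_continuous_restrict]
  haveI : Finite (spectrum ℝ P) := Set.Finite.to_subtype P.finite_real_spectrum
  exact continuous_of_discreteTopology

lemma posDef_conj {P M : Matrix n n ℂ} (hP : P.PosDef) (hM : IsUnit M) :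
    (M * P * Mᴴ).PosDef := by
  refine posDef_iff_dotProduct_mulVec.mpr ⟨?_, ?_⟩
  · have := congrArg (fun X => M * X * Mᴴ) hP.1.eq
    simpa [Matrix.IsHermitian, mul_assoc] using this
  · intro x hx
    have hx' : Mᴴ *ᵥ x ≠ 0 := by
      have : Function.Injective (Mᴴ.mulVec) :=
        Matrix.mulVec_injective_iff_isUnit.mpr ((Matrix.isUnit_conjTranspose M).mpr hM)
      intro h
      exact hx (this (by simpa using h))
    have hq := hP.dotProduct_mulVec_pos hx'
    have key : star x ⬝ᵥ (M * P * Mᴴ) *ᵥ x = star (Mᴴ *ᵥ x) ⬝ᵥ P *ᵥ (Mᴴ *ᵥ x) := by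
      rw [star_mulVec, conjTranspose_conjTranspose, ← mulVec_mulVec, ← mulVec_mulVec,
        dotProduct_mulVec]
    rw [key]
    exact hq


section mpow
variable {p q : ℕ} {P Q : Matrix (Fin p ⊕ Fin q) (Fin p ⊕ Fin q) ℂ}

lemma mpow_isHermitian (P : Matrix (Fin p ⊕ Fin q) (Fin p ⊕ Fin q) ℂ) (t : ℝ) :
    (mpow P t).IsHermitian := by
  have : IsSelfAdjoint (mpow P t) := cfc_predicate _ P
  exact this

lemma mpow_add (hP : P.PosDef) (s t : ℝ) : mpow P s * mpow P t = mpow P (s + t) := by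
  unfold mpow
  rw [← cfc_mul _ _ P (contOn _) (contOn _)]
  exact cfc_congr fun x hx => (Real.rpow_add (spectrum_pos' hP x hx) s t).symm

lemma mpow_one (hP : P.PosDef) : mpow P 1 = P := by
  unfold mpow
  rw [cfc_congr (g := fun x : ℝ => x) fun x _ => Real.rpow_one x]
  exact cfc_id' ℝ P hP.1

lemma mpow_zero (hP : P.PosDef) : mpow P 0 = 1 := by
  unfold mpow
  rw [cfc_congr (g := fun _ : ℝ => 1) fun x _ => Real.rpow_zero x]
  exact cfc_const_one ℝ P hP.1

lemma mpow_mul_mpow_neg (hP : P.PosDef) (t : ℝ) : mpow P t * mpow P (-t) = 1 := by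
  rw [mpow_add hP, add_neg_cancel, mpow_zero hP]

lemma mpow_inv (hP : P.PosDef) (t : ℝ) : (mpow P t)⁻¹ = mpow P (-t) :=
  Matrix.inv_eq_right_inv (mpow_mul_mpow_neg hP t)

lemma mpow_posDef (hP : P.PosDef) (t : ℝ) : (mpow P t).PosDef := by
  rw [mpow, hP.1.cfc_eq, Matrix.IsHermitian.cfc]
  have hU : IsUnit (hP.1.eigenvectorUnitary : Matrix (Fin p ⊕ Fin q) (Fin p ⊕ Fin q) ℂ) :=
    (Unitary.toUnits (Matrix.IsHermitian.eigenvectorUnitary hP.1)).isUnit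
  have hd : (Matrix.diagonal ((RCLike.ofReal (K := ℂ)) ∘ (fun x : ℝ => x ^ t) ∘ hP.1.eigenvalues)).PosDef := by
    rw [Matrix.posDef_diagonal_iff]
    intro i
    simp only [Function.comp_apply]
    exact RCLike.ofReal_pos.mpr (Real.rpow_pos_of_pos (hP.eigenvalues_pos i) t)
  have := posDef_conj hd hU
  simpa [Matrix.star_eq_conjTranspose] using this

end mpow

section gmean
variable {p q : ℕ} {P Q X Y : Matrix (Fin p ⊕ Fin q) (Fin p ⊕ Fin q) ℂ}

lemma inner_posDef (hP : P.PosDef) (hQ : Q.PosDef) :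
    (mpow P (-(1 / 2)) * Q * mpow P (-(1 / 2))).PosDef := by
  have h := posDef_conj hQ (mpow_posDef hP (-(1/2))).isUnit
  rwa [(mpow_isHermitian P (-(1/2))).eq] at h

lemma gmean_posDef (hP : P.PosDef) (hQ : Q.PosDef) : (gmean P Q).PosDef := by
  unfold gmean
  have h := posDef_conj (mpow_posDef (inner_posDef hP hQ) (1/2)) (mpow_posDef hP (1/2)).isUnit
  rwa [(mpow_isHermitian P (1/2)).eq] at h

lemma gmean_eq (hP : P.PosDef) (hQ : Q.PosDef) : gmean P Q * P⁻¹ * gmean P Q = Q := by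
  set S := mpow P (1/2) with hS
  set R := mpow P (-(1/2)) with hR
  set T := mpow (R * Q * R) (1/2) with hT
  have hSR : S * R = 1 := by rw [hS, hR, mpow_add hP]; norm_num; exact mpow_zero hP
  have hRS : R * S = 1 := by rw [hS, hR, mpow_add hP]; norm_num; exact mpow_zero hP
  have hPinv : P⁻¹ = R * R := by
    rw [hR, mpow_add hP]
    norm_num
    rw [← mpow_inv hP 1, mpow_one hP]
  have hTT : T * T = R * Q * R := by
    rw [hT, mpow_add (inner_posDef hP hQ)]
    norm_num
    exact mpow_one (inner_posDef hP hQ)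
  show S * T * S * P⁻¹ * (S * T * S) = Q
  rw [hPinv]
  calc S * T * S * (R * R) * (S * T * S)
      = S * T * ((S * R) * ((R * S) * (T * S))) := by noncomm_ring
    _ = S * (T * T) * S := by rw [hSR, hRS]; noncomm_ring
    _ = S * (R * Q * R) * S := by rw [hTT]
    _ = (S * R) * Q * (R * S) := by noncomm_ring
    _ = Q := by rw [hSR, hRS]; noncomm_ring

lemma riccati_unique (hP : P.PosDef) (hX : X.PosDef) (hY : Y.PosDef)
    (h : X * P⁻¹ * X = Y * P⁻¹ * Y) : X = Y := by
  set R := mpow P (-(1/2)) with hR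
  set S := mpow P (1/2) with hS
  have hRX : (R * X * R).PosDef := by
    have := posDef_conj hX (mpow_posDef hP (-(1/2))).isUnit
    rwa [(mpow_isHermitian P (-(1/2))).eq] at this
  have hRY : (R * Y * R).PosDef := by
    have := posDef_conj hY (mpow_posDef hP (-(1/2))).isUnit
    rwa [(mpow_isHermitian P (-(1/2))).eq] at this
  have hPinv : R * R = P⁻¹ := by
    rw [hR, mpow_add hP]
    norm_num
    rw [← mpow_inv hP 1, mpow_one hP]
  have hsq : (R * X * R) ^ 2 = (R * Y * R) ^ 2 := by
    have e1 : (R * X * R) ^ 2 = R * (X * P⁻¹ * X) * R := by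
      rw [← hPinv]; noncomm_ring
    have e2 : (R * Y * R) ^ 2 = R * (Y * P⁻¹ * Y) * R := by
      rw [← hPinv]; noncomm_ring
    rw [e1, e2, h]
  have heq : R * X * R = R * Y * R := by
    open scoped MatrixOrder in
    exact (CFC.sq_eq_sq_iff _ _ hRX.posSemidef.nonneg hRY.posSemidef.nonneg).mp hsq
  have hSR : S * R = 1 := by rw [hS, hR, mpow_add hP]; norm_num; exact mpow_zero hP
  have hRS : R * S = 1 := by rw [hS, hR, mpow_add hP]; norm_num; exact mpow_zero hP
  calc X = (S * R) * X * (R * S) := by rw [hSR, hRS]; noncomm_ring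
    _ = S * (R * X * R) * S := by noncomm_ring
    _ = S * (R * Y * R) * S := by rw [heq]
    _ = (S * R) * Y * (R * S) := by noncomm_ring
    _ = Y := by rw [hSR, hRS]; noncomm_ring

lemma gmean_comm (hP : P.PosDef) (hQ : Q.PosDef) : gmean P Q = gmean Q P := by
  apply riccati_unique hQ (gmean_posDef hP hQ) (gmean_posDef hQ hP)
  rw [gmean_eq hQ hP]
  -- goal : gmean P Q * Q⁻¹ * gmean P Q = P
  have hG := gmean_posDef hP hQ
  have hkey := gmean_eq hP hQ
  have hQinv : Q⁻¹ = (gmean P Q)⁻¹ * P * (gmean P Q)⁻¹ := by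
    have h0 : Q⁻¹ = (gmean P Q * P⁻¹ * gmean P Q)⁻¹ := by rw [hkey]
    rw [h0, Matrix.mul_inv_rev, Matrix.mul_inv_rev,
      Matrix.nonsing_inv_nonsing_inv _ (Matrix.isUnit_iff_isUnit_det _ |>.mp hP.isUnit),
      ← mul_assoc]
  rw [hQinv]
  rw [show gmean P Q * ((gmean P Q)⁻¹ * P * (gmean P Q)⁻¹) * gmean P Q
      = (gmean P Q * (gmean P Q)⁻¹) * P * ((gmean P Q)⁻¹ * gmean P Q) by noncomm_ring,
    Matrix.mul_nonsing_inv _ (Matrix.isUnit_iff_isUnit_det _ |>.mp hG.isUnit),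
    Matrix.nonsing_inv_mul _ (Matrix.isUnit_iff_isUnit_det _ |>.mp hG.isUnit)]
  noncomm_ring

lemma gmean_inv (hP : P.PosDef) (hQ : Q.PosDef) : (gmean P Q)⁻¹ = gmean P⁻¹ Q⁻¹ := by
  have hG := gmean_posDef hP hQ
  apply riccati_unique hP.inv hG.inv (gmean_posDef hP.inv hQ.inv)
  rw [gmean_eq hP.inv hQ.inv]
  rw [Matrix.nonsing_inv_nonsing_inv _ (Matrix.isUnit_iff_isUnit_det _ |>.mp hP.isUnit)]
  rw [show (gmean P Q)⁻¹ * P * (gmean P Q)⁻¹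
      = (gmean P Q * P⁻¹ * gmean P Q)⁻¹ by
    rw [Matrix.mul_inv_rev, Matrix.mul_inv_rev,
      Matrix.nonsing_inv_nonsing_inv _ (Matrix.isUnit_iff_isUnit_det _ |>.mp hP.isUnit),
      ← mul_assoc]]
  rw [gmean_eq hP hQ]

end gmean

section J
variable {p q : ℕ} {P Q A B : Matrix (Fin p ⊕ Fin q) (Fin p ⊕ Fin q) ℂ}

lemma sigJ_mul_self : sigJ p q * sigJ p q = 1 := by
  simp [sigJ, Matrix.fromBlocks_multiply, ← Matrix.fromBlocks_one]

lemma sigJ_hermitian : (sigJ p q)ᴴ = sigJ p q := by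
  simp [sigJ, Matrix.fromBlocks_conjTranspose]

lemma sigJ_isUnit : IsUnit (sigJ p q) :=
  ⟨⟨sigJ p q, sigJ p q, sigJ_mul_self, sigJ_mul_self⟩, rfl⟩

lemma sigJ_inv : (sigJ p q)⁻¹ = sigJ p q :=
  Matrix.inv_eq_right_inv sigJ_mul_self

lemma conjJ_mul (X Y : Matrix (Fin p ⊕ Fin q) (Fin p ⊕ Fin q) ℂ) :
    (sigJ p q * X * sigJ p q) * (sigJ p q * Y * sigJ p q)
      = sigJ p q * (X * Y) * sigJ p q := by
  calc (sigJ p q * X * sigJ p q) * (sigJ p q * Y * sigJ p q)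
      = sigJ p q * (X * ((sigJ p q * sigJ p q) * Y)) * sigJ p q := by noncomm_ring
    _ = sigJ p q * (X * Y) * sigJ p q := by rw [sigJ_mul_self, one_mul]

lemma posDef_conjJ (hP : P.PosDef) : (sigJ p q * P * sigJ p q).PosDef := by
  have := posDef_conj hP sigJ_isUnit
  rwa [sigJ_hermitian] at this

lemma inv_conjJ (hP : P.PosDef) :
    (sigJ p q * P * sigJ p q)⁻¹ = sigJ p q * P⁻¹ * sigJ p q := by
  apply Matrix.inv_eq_right_inv
  rw [conjJ_mul, Matrix.mul_nonsing_inv _ (Matrix.isUnit_iff_isUnit_det _ |>.mp hP.isUnit)]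
  calc sigJ p q * 1 * sigJ p q = sigJ p q * sigJ p q := by noncomm_ring
    _ = 1 := sigJ_mul_self

lemma gmean_conjJ (hP : P.PosDef) (hQ : Q.PosDef) :
    gmean (sigJ p q * P * sigJ p q) (sigJ p q * Q * sigJ p q)
      = sigJ p q * gmean P Q * sigJ p q := by
  symm
  apply riccati_unique (posDef_conjJ hP) (posDef_conjJ (gmean_posDef hP hQ))
    (gmean_posDef (posDef_conjJ hP) (posDef_conjJ hQ))
  rw [gmean_eq (posDef_conjJ hP) (posDef_conjJ hQ), inv_conjJ hP, conjJ_mul, conjJ_mul, gmean_eq hP hQ]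

private theorem stmt18' (A B : Matrix (Fin p ⊕ Fin q) (Fin p ⊕ Fin q) ℂ)
    (hA : Aᴴ = sigJ p q * A * sigJ p q) (hposA : (sigJ p q * A).PosDef)
    (hB : Bᴴ = sigJ p q * B * sigJ p q) (hposB : (sigJ p q * B).PosDef) :
    sharpJ A B = sharpJ B A ∧ (sharpJ A B)⁻¹ = sharpJ A⁻¹ B⁻¹ := by
  constructor
  · unfold sharpJ
    rw [gmean_comm hposA hposB]
  · have hJA : sigJ p q * A⁻¹ = sigJ p q * (sigJ p q * A)⁻¹ * sigJ p q := by
      rw [Matrix.mul_inv_rev, sigJ_inv]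
      symm
      calc sigJ p q * (A⁻¹ * sigJ p q) * sigJ p q
          = sigJ p q * A⁻¹ * (sigJ p q * sigJ p q) := by noncomm_ring
        _ = sigJ p q * A⁻¹ := by rw [sigJ_mul_self, mul_one]
    have hJB : sigJ p q * B⁻¹ = sigJ p q * (sigJ p q * B)⁻¹ * sigJ p q := by
      rw [Matrix.mul_inv_rev, sigJ_inv]
      symm
      calc sigJ p q * (B⁻¹ * sigJ p q) * sigJ p q
          = sigJ p q * B⁻¹ * (sigJ p q * sigJ p q) := by noncomm_ring
        _ = sigJ p q * B⁻¹ := by rw [sigJ_mul_self, mul_one]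
    unfold sharpJ
    rw [hJA, hJB, gmean_conjJ hposA.inv hposB.inv, Matrix.mul_inv_rev, sigJ_inv,
      gmean_inv hposA hposB]
    calc gmean (sigJ p q * A)⁻¹ (sigJ p q * B)⁻¹ * sigJ p q
        = sigJ p q * (sigJ p q * (gmean (sigJ p q * A)⁻¹ (sigJ p q * B)⁻¹ * sigJ p q)) := by
          rw [← mul_assoc, sigJ_mul_self, one_mul]
      _ = sigJ p q * (sigJ p q * gmean (sigJ p q * A)⁻¹ (sigJ p q * B)⁻¹ * sigJ p q) := by
          noncomm_ring

end J
end Aux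

/-- For `A, B ∈ 𝒫_J`: (i) `A ♯^J B = B ♯^J A`; (ii) `(A ♯^J B)⁻¹ = A⁻¹ ♯^J B⁻¹`. -/
theorem stmt18 (p q : ℕ) (A B : Matrix (Fin p ⊕ Fin q) (Fin p ⊕ Fin q) ℂ)
    (hA : Aᴴ = sigJ p q * A * sigJ p q) (hposA : (sigJ p q * A).PosDef)
    (hB : Bᴴ = sigJ p q * B * sigJ p q) (hposB : (sigJ p q * B).PosDef) :
    sharpJ A B = sharpJ B A ∧ (sharpJ A B)⁻¹ = sharpJ A⁻¹ B⁻¹ := by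
  exact stmt18' A B hA hposA hB hposB
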